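/- Suppose the conditional distribution P_{F|Y} is Blackwell sufficient for P_{B|Y}, i.e., there exists a channel (conditional distribution) P_{B'|F} with P_{B'|F} ∘ P_{F|Y} = P_{B|Y}, where (P_{B'|F} ∘ P_{F|Y})(b|y) = Σ_f P_{B'|F}(b|f)P_{F|Y}(f|y). Then Uni(Y; B|F) = 0. -/
import Mathlib


open scoped BigOperators

section PID

/-- A joint probability distribution on a product of three finite types,
represented as a nonnegative function summing to one. -/
def IsDist3 {Y F B : Type*} [Fintype Y] [Fintype F] [Fintype B]
    (P : Y → F → B → ℝ) : Prop :=
  (∀ y f b, 0 ≤ P y f b) ∧ ∑ y, ∑ f, ∑ b, P y f b = 1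

/-- Marginal on (Y, F). -/
def margYF {Y F B : Type*} [Fintype B] (P : Y → F → B → ℝ) (y : Y) (f : F) : ℝ :=
  ∑ b, P y f b

/-- Marginal on (Y, B). -/
def margYB {Y F B : Type*} [Fintype F] (P : Y → F → B → ℝ) (y : Y) (b : B) : ℝ :=
  ∑ f, P y f b

/-- Marginal on (F, B). -/
def margFB {Y F B : Type*} [Fintype Y] (P : Y → F → B → ℝ) (f : F) (b : B) : ℝ :=
  ∑ y, P y f b

/-- Marginal on Y. -/
def margY {Y F B : Type*} [Fintype F] [Fintype B] (P : Y → F → B → ℝ) (y : Y) : ℝ :=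
  ∑ f, ∑ b, P y f b

/-- Marginal on F. -/
def margF {Y F B : Type*} [Fintype Y] [Fintype B] (P : Y → F → B → ℝ) (f : F) : ℝ :=
  ∑ y, ∑ b, P y f b

/-- Marginal on B. -/
def margB {Y F B : Type*} [Fintype Y] [Fintype F] (P : Y → F → B → ℝ) (b : B) : ℝ :=
  ∑ y, ∑ f, P y f b

/-- Conditional mutual information I_Q(Y ; B | F) for a joint distribution `Q`
on `Y × F × B` (natural log; `0 log 0 = 0` conventions via `Real.log 0 = 0`
and division-by-zero conventions). -/
noncomputable def condMI {Y F B : Type*} [Fintype Y] [Fintype F] [Fintype B]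
    (Q : Y → F → B → ℝ) : ℝ :=
  ∑ y, ∑ f, ∑ b, Q y f b *
    Real.log ((Q y f b * margF Q f) / (margYF Q y f * margFB Q f b))

/-- Mutual information I_P(Y ; B). -/
noncomputable def mutYB {Y F B : Type*} [Fintype Y] [Fintype F] [Fintype B]
    (P : Y → F → B → ℝ) : ℝ :=
  ∑ y, ∑ b, margYB P y b * Real.log (margYB P y b / (margY P y * margB P b))

/-- Mutual information I_P(Y ; F). -/
noncomputable def mutYF {Y F B : Type*} [Fintype Y] [Fintype F] [Fintype B]
    (P : Y → F → B → ℝ) : ℝ :=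
  ∑ y, ∑ f, margYF P y f * Real.log (margYF P y f / (margY P y * margF P f))

/-- Mutual information I_P(Y ; (F, B)). -/
noncomputable def mutYFB {Y F B : Type*} [Fintype Y] [Fintype F] [Fintype B]
    (P : Y → F → B → ℝ) : ℝ :=
  ∑ y, ∑ f, ∑ b, P y f b * Real.log (P y f b / (margY P y * margFB P f b))

/-- The feasible set Δ_P of joint distributions matching the (Y,F) and (Y,B)
marginals of `P`. -/
def Delta {Y F B : Type*} [Fintype Y] [Fintype F] [Fintype B]
    (P : Y → F → B → ℝ) : Set (Y → F → B → ℝ) :=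
  {Q | IsDist3 Q ∧ (∀ y f, margYF Q y f = margYF P y f) ∧
      (∀ y b, margYB Q y b = margYB P y b)}

/-- Unique information Uni(Y ; B | F) (Bertschinger et al.):
the infimum of I_Q(Y ; B | F) over Q ∈ Δ_P. -/
noncomputable def uni {Y F B : Type*} [Fintype Y] [Fintype F] [Fintype B]
    (P : Y → F → B → ℝ) : ℝ :=
  sInf (condMI '' Delta P)

/-- A matrix with entries in [0,1] whose rows each sum to 1. -/
def RowStochastic {F B : Type*} [Fintype B] (T : F → B → ℝ) : Prop :=
  (∀ f b, 0 ≤ T f b ∧ T f b ≤ 1) ∧ ∀ f, ∑ b, T f b = 1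

end PID


lemma condMI_nonneg {Y F B : Type*} [Fintype Y] [Fintype F] [Fintype B]
    (Q : Y → F → B → ℝ) (hQ : IsDist3 Q) : 0 ≤ condMI Q := by
  obtain ⟨hnn, hsum⟩ := hQ
  have hYFnn : ∀ y f, 0 ≤ margYF Q y f := fun y f =>
    Finset.sum_nonneg (fun b _ => hnn y f b)
  have hFBnn : ∀ f b, 0 ≤ margFB Q f b := fun f b =>
    Finset.sum_nonneg (fun y _ => hnn y f b)
  have hFnn : ∀ f, 0 ≤ margF Q f := fun f =>
    Finset.sum_nonneg (fun y _ => Finset.sum_nonneg (fun b _ => hnn y f b))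
  set R : Y → F → B → ℝ := fun y f b => margYF Q y f * margFB Q f b / margF Q f with hRdef
  have hRnn : ∀ y f b, 0 ≤ R y f b := fun y f b =>
    div_nonneg (mul_nonneg (hYFnn y f) (hFBnn f b)) (hFnn f)
  have key : ∀ y f b, Q y f b - R y f b ≤ Q y f b *
      Real.log ((Q y f b * margF Q f) / (margYF Q y f * margFB Q f b)) := by
    intro y f b
    rcases eq_or_lt_of_le (hnn y f b) with h0 | hq
    · rw [← h0]; simpa using hRnn y f b
    · have hYF : 0 < margYF Q y f :=
        lt_of_lt_of_le hq (Finset.single_le_sum (fun b' _ => hnn y f b') (Finset.mem_univ b))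
      have hFB : 0 < margFB Q f b :=
        lt_of_lt_of_le hq (Finset.single_le_sum (fun y' _ => hnn y' f b) (Finset.mem_univ y))
      have hF : 0 < margF Q f := by
        refine lt_of_lt_of_le hYF ?_
        exact Finset.single_le_sum (fun y' _ => hYFnn y' f) (Finset.mem_univ y)
      have hRpos : 0 < R y f b := div_pos (mul_pos hYF hFB) hF
      have harg : (Q y f b * margF Q f) / (margYF Q y f * margFB Q f b)
          = Q y f b / R y f b := by
        rw [hRdef]
        rw [div_div_eq_mul_div]
      rw [harg]
      have hlog := Real.log_le_sub_one_of_pos (div_pos hRpos hq)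
      have hlog2 : 1 - R y f b / Q y f b ≤ Real.log (Q y f b / R y f b) := by
        rw [Real.log_div (ne_of_gt hq) (ne_of_gt hRpos)]
        rw [Real.log_div (ne_of_gt hRpos) (ne_of_gt hq)] at hlog
        linarith
      have := mul_le_mul_of_nonneg_left hlog2 (le_of_lt hq)
      calc Q y f b - R y f b = Q y f b * (1 - R y f b / Q y f b) := by
            field_simp
        _ ≤ Q y f b * Real.log (Q y f b / R y f b) := this
  have hRsum : ∑ y, ∑ f, ∑ b, R y f b = 1 := by
    have hswap : ∀ f, ∑ y, ∑ b, R y f b = margF Q f := by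
      intro f
      have h1 : ∑ y, ∑ b, R y f b
          = (∑ y, margYF Q y f) * (∑ b, margFB Q f b) / margF Q f := by
        rw [hRdef]
        rw [Finset.sum_mul, Finset.sum_div]
        refine Finset.sum_congr rfl (fun y _ => ?_)
        rw [Finset.mul_sum, Finset.sum_div]
      have h2 : (∑ y, margYF Q y f) = margF Q f := rfl
      have h3 : (∑ b, margFB Q f b) = margF Q f := by
        rw [margF]
        rw [Finset.sum_comm]
        rfl
      rw [h1, h2, h3]
      rcases eq_or_ne (margF Q f) 0 with h | h
      · simp [h]
      · field_simp
    have : ∑ y, ∑ f, ∑ b, R y f b = ∑ f, ∑ y, ∑ b, R y f b := Finset.sum_comm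
    rw [this]
    rw [Finset.sum_congr rfl (fun f _ => hswap f)]
    rw [← hsum]
    exact Finset.sum_comm
  have hsum_le : (1 : ℝ) - 1 ≤ condMI Q := by
    rw [condMI]
    calc (1:ℝ) - 1 = (∑ y, ∑ f, ∑ b, Q y f b) - ∑ y, ∑ f, ∑ b, R y f b := by
          rw [hsum, hRsum]
      _ = ∑ y, ∑ f, ∑ b, (Q y f b - R y f b) := by
          simp [Finset.sum_sub_distrib]
      _ ≤ _ := by
          refine Finset.sum_le_sum (fun y _ => ?_)
          refine Finset.sum_le_sum (fun f _ => ?_)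
          exact Finset.sum_le_sum (fun b _ => key y f b)
  linarith

/-- Blackwell sufficiency of P_{F|Y} for P_{B|Y} implies
Uni(Y;B|F) = 0. -/
theorem stmt8 {Y F B : Type*} [Fintype Y] [Fintype F] [Fintype B]
    (P : Y → F → B → ℝ) (hP : IsDist3 P) (hpos : ∀ y, 0 < margY P y)
    (T : F → B → ℝ) (hT : RowStochastic T)
    (hch : ∀ y b, margYB P y b / margY P y =
      ∑ f, T f b * (margYF P y f / margY P y)) :
    uni P = 0 := by
  classical
  obtain ⟨hPnn, hPsum⟩ := hP
  obtain ⟨hTnn, hTrow⟩ := hT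
  set Q : Y → F → B → ℝ := fun y f b => margYF P y f * T f b with hQdef
  have hPYFnn : ∀ y f, 0 ≤ margYF P y f := fun y f =>
    Finset.sum_nonneg (fun b _ => hPnn y f b)
  have hQnn : ∀ y f b, 0 ≤ Q y f b := fun y f b =>
    mul_nonneg (hPYFnn y f) (hTnn f b).1
  have hQYF : ∀ y f, margYF Q y f = margYF P y f := by
    intro y f
    show ∑ b, margYF P y f * T f b = margYF P y f
    rw [← Finset.mul_sum, hTrow f, mul_one]
  have hQYB : ∀ y b, margYB Q y b = margYB P y b := by
    intro y b
    have h := hch y b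
    have hy := hpos y
    have : margYB P y b = ∑ f, T f b * margYF P y f := by
      have := congrArg (fun x => x * margY P y) h
      simp only [div_mul_cancel₀ _ (ne_of_gt hy)] at this
      rw [this, Finset.sum_mul]
      refine Finset.sum_congr rfl (fun f _ => ?_)
      field_simp
    rw [this]
    show ∑ f, margYF P y f * T f b = _
    exact Finset.sum_congr rfl (fun f _ => mul_comm _ _)
  have hQdist : IsDist3 Q := by
    refine ⟨hQnn, ?_⟩
    have : ∀ y, ∑ f, ∑ b, Q y f b = ∑ f, ∑ b, P y f b := by
      intro y
      refine Finset.sum_congr rfl (fun f _ => ?_)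
      show ∑ b, margYF P y f * T f b = ∑ b, P y f b
      rw [← Finset.mul_sum, hTrow f, mul_one]
      rfl
    rw [Finset.sum_congr rfl (fun y _ => this y), hPsum]
  have hQD : Q ∈ Delta P := ⟨hQdist, hQYF, hQYB⟩
  have hQF : ∀ f, margF Q f = ∑ y, margYF P y f := by
    intro f
    show ∑ y, ∑ b, margYF P y f * T f b = _
    refine Finset.sum_congr rfl (fun y _ => ?_)
    rw [← Finset.mul_sum, hTrow f, mul_one]
  have hQFB : ∀ f b, margFB Q f b = (∑ y, margYF P y f) * T f b := by
    intro f b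
    show ∑ y, margYF P y f * T f b = _
    rw [Finset.sum_mul]
  have hczero : condMI Q = 0 := by
    rw [condMI]
    refine Finset.sum_eq_zero (fun y _ => Finset.sum_eq_zero (fun f _ =>
      Finset.sum_eq_zero (fun b _ => ?_)))
    rcases eq_or_lt_of_le (hQnn y f b) with h0 | hq
    · rw [← h0, zero_mul]
    · have hYF : 0 < margYF P y f := by
        rcases lt_or_eq_of_le (hPYFnn y f) with h | h
        · exact h
        · exfalso; rw [hQdef] at hq; simp only [← h, zero_mul] at hq; exact lt_irrefl 0 hq
      have hTb : 0 < T f b := by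
        rcases lt_or_eq_of_le (hTnn f b).1 with h | h
        · exact h
        · exfalso; rw [hQdef] at hq; simp only [← h, mul_zero] at hq; exact lt_irrefl 0 hq
      have hPf : 0 < ∑ y, margYF P y f :=
        lt_of_lt_of_le hYF (Finset.single_le_sum (fun y' _ => hPYFnn y' f) (Finset.mem_univ y))
      have harg : (Q y f b * margF Q f) / (margYF Q y f * margFB Q f b) = 1 := by
        rw [hQF, hQFB, hQYF]
        show (margYF P y f * T f b * (∑ y, margYF P y f)) /
          (margYF P y f * ((∑ y, margYF P y f) * T f b)) = 1
        rw [div_eq_one_iff_eq (by positivity)]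
        ring
      rw [harg, Real.log_one, mul_zero]
  have hmem : (0 : ℝ) ∈ condMI '' Delta P := ⟨Q, hQD, hczero⟩
  have hlb : ∀ x ∈ condMI '' Delta P, (0:ℝ) ≤ x := by
    rintro x ⟨Q', hQ', rfl⟩
    exact condMI_nonneg Q' hQ'.1
  rw [uni]
  refine le_antisymm (csInf_le ⟨0, hlb⟩ hmem) (le_csInf ⟨0, hmem⟩ hlb)
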